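/- Let A be a finite alphabet and P = {(n_j, I_j)}_{j∈ℕ} a countable set of pairs with n_j ∈ ℤ and I_j a finite word over A of length m_j, such that every sequence s ∈ A^ℤ coincides with at most one pair of P (where s coincides with (n_j,I_j) means s_{n_j}...s_{n_j+m_j−1} = I_j). If P is infinite, then S_P ≠ A^ℤ, where S_P is the set of sequences coinciding with some pair of P. -/

import Mathlib

/-- `s` coincides with the pair `p = (n, I)` if the symbols of `s` at positions
`n, ..., n + |I| - 1` form the word `I`. -/
def Coincides {A : Type*} (s : ℤ → A) (p : ℤ × List A) : Prop :=
  ∀ (i : ℕ) (hi : i < p.2.length), s (p.1 + i) = p.2.get ⟨i, hi⟩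

/-- The set of sequences coinciding with some pair of `P`. -/
def SP {A : Type*} (P : Set (ℤ × List A)) : Set (ℤ → A) :=
  {s | ∃ p ∈ P, Coincides s p}

/-- Every sequence coincides with at most one pair of `P`
(the defining condition of a countable generalized shift). -/
def AtMostOne {A : Type*} (P : Set (ℤ × List A)) : Prop :=
  ∀ s : ℤ → A, ∀ p ∈ P, ∀ q ∈ P, Coincides s p → Coincides s q → p = q

/-- Replace the symbols of `s` at positions `n, ..., n + |w| - 1` by the word `w`. -/
noncomputable def replaceWord {A : Type*} (s : ℤ → A) (n : ℤ) (w : List A) : ℤ → A :=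
  fun k => if h : 0 ≤ k - n ∧ (k - n).toNat < w.length
    then w.get ⟨(k - n).toNat, h.2⟩ else s k

open scoped Classical in
/-- The countable generalized shift determined by the data `(P, J, H)`: if `s`
coincides with a (necessarily unique, when `AtMostOne P` holds) pair `p ∈ P`, replace
the word of `p` in `s` by `J p` and shift by `H p` (position `k` of the image is
position `k + H p` of the replaced sequence); otherwise leave `s` unchanged. -/
noncomputable def cgsApply {A : Type*} (P : Set (ℤ × List A)) (J : ℤ × List A → List A)
    (H : ℤ × List A → ℤ) (s : ℤ → A) : ℤ → A :=
  if h : ∃ p ∈ P, Coincides s p then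
    fun k => replaceWord s h.choose.1 (J h.choose) (k + H h.choose)
  else s

/-- Diagonal argument: if `P` is an infinite set of pairs over a finite alphabet,
such that every sequence coincides with at most one pair of `P`, then `S_P ≠ A^ℤ`. -/
theorem SP_ne_univ_of_infinite {A : Type*} [Fintype A] [Nonempty A]
    (P : Set (ℤ × List A)) (hone : AtMostOne P) (hinf : P.Infinite) :
    SP P ≠ Set.univ := by
  classical
  intro hSP
  letI : TopologicalSpace A := ⊥
  haveI : DiscreteTopology A := ⟨rfl⟩
  have d : A := Classical.arbitrary A
  -- cylinders are open
  have hopen : ∀ p : ℤ × List A, IsOpen {s : ℤ → A | Coincides s p} := by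
    intro p
    have he : {s : ℤ → A | Coincides s p} =
        ⋂ i ∈ Finset.range p.2.length,
          (fun s : ℤ → A => s (p.1 + i)) ⁻¹' {p.2.getD i d} := by
      ext s
      simp only [Set.mem_setOf_eq, Set.mem_iInter, Finset.mem_range, Set.mem_preimage,
        Set.mem_singleton_iff, Coincides]
      constructor
      · intro h i hi
        rw [List.getD_eq_get (i := ⟨i, hi⟩)]
        exact h i hi
      · intro h i hi
        have := h i hi
        rwa [List.getD_eq_get (i := ⟨i, hi⟩)] at this
    rw [he]
    exact isOpen_biInter_finset fun i _ =>
      (continuous_apply (p.1 + (i : ℤ))).isOpen_preimage _ (isOpen_discrete _)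
  -- cylinders are nonempty
  have hne : ∀ p : ℤ × List A, ∃ s : ℤ → A, Coincides s p := by
    intro p
    refine ⟨fun k => p.2.getD (k - p.1).toNat d, ?_⟩
    intro i hi
    have h1 : (p.1 + (i : ℤ) - p.1).toNat = i := by omega
    simp only [h1]
    exact List.getD_eq_get _ _ ⟨i, hi⟩
  -- compactness
  have hcover : (Set.univ : Set (ℤ → A)) ⊆
      ⋃ p : P, {s : ℤ → A | Coincides s (p : ℤ × List A)} := by
    intro s _
    have hs : s ∈ SP P := by rw [hSP]; trivial
    obtain ⟨p, hp, hc⟩ := hs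
    exact Set.mem_iUnion.2 ⟨⟨p, hp⟩, hc⟩
  obtain ⟨t, ht⟩ := isCompact_univ.elim_finite_subcover
    (fun p : P => {s : ℤ → A | Coincides s (p : ℤ × List A)})
    (fun p : P => hopen p) hcover
  obtain ⟨q, hqP, hq⟩ := hinf.exists_notMem_finset (t.image Subtype.val)
  obtain ⟨s, hs⟩ := hne q
  have hsmem : s ∈ ⋃ p ∈ t, {s : ℤ → A | Coincides s (p : ℤ × List A)} :=
    ht (Set.mem_univ s)
  rw [Set.mem_iUnion₂] at hsmem
  obtain ⟨p, hpt, hsp⟩ := hsmem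
  have heq : q = (p : ℤ × List A) := hone s q hqP p p.2 hs hsp
  exact hq (Finset.mem_image.2 ⟨p, hpt, heq.symm⟩)
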